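/- Let α ∈ (0,1) be irrational with convergents p_k/q_k, and let k ≥ 1. Then for every integer j with 1 ≤ j < q_{k+1}/3, the fractional part {jα} does not belong to the interval [1/(3q_k), 2/(3q_k)]. -/

import Mathlib

/-- Complete quotients of the continued fraction of `α ∈ (0,1)`:
`cfQuot α 0 = 1/α`, and `cfQuot α (k+1) = 1/(cfQuot α k - ⌊cfQuot α k⌋)`.
The digit `a_{k+1}` is `⌊cfQuot α k⌋`. -/
noncomputable def cfQuot (α : ℝ) : ℕ → ℝ
  | 0 => 1 / α
  | k + 1 => 1 / (cfQuot α k - ⌊cfQuot α k⌋)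

/-- The `k`-th continued fraction digit `a_k` of `α ∈ (0,1)`, for `k ≥ 1`. -/
noncomputable def cfDigit (α : ℝ) (k : ℕ) : ℤ := ⌊cfQuot α (k - 1)⌋

/-- Numerators of the convergents: `p_0 = 0`, `p_1 = 1`,
`p_{k+2} = a_{k+2} p_{k+1} + p_k`. -/
noncomputable def cfP (α : ℝ) : ℕ → ℤ
  | 0 => 0
  | 1 => 1
  | k + 2 => cfDigit α (k + 2) * cfP α (k + 1) + cfP α k

/-- Denominators of the convergents: `q_0 = 1`, `q_1 = a_1`,
`q_{k+2} = a_{k+2} q_{k+1} + q_k`. -/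
noncomputable def cfQ (α : ℝ) : ℕ → ℤ
  | 0 => 1
  | 1 => cfDigit α 1
  | k + 2 => cfDigit α (k + 2) * cfQ α (k + 1) + cfQ α k

lemma cfQuot_irr_gt (α : ℝ) (hirr : Irrational α) (h0 : 0 < α) (h1 : α < 1) :
    ∀ k, Irrational (cfQuot α k) ∧ 1 < cfQuot α k := by
  intro k
  induction k with
  | zero =>
    refine ⟨?_, ?_⟩
    · simpa [cfQuot, one_div] using hirr.inv
    · rw [cfQuot]; exact one_lt_one_div h0 h1
  | succ n ih =>
    obtain ⟨hi, hgt⟩ := ih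
    have hne : cfQuot α n ≠ (⌊cfQuot α n⌋ : ℝ) := hi.ne_int _
    have hfpos : 0 < cfQuot α n - ⌊cfQuot α n⌋ := by
      rw [Int.self_sub_floor]
      exact Int.fract_pos.mpr hne
    have hflt : cfQuot α n - ⌊cfQuot α n⌋ < 1 := by
      rw [Int.self_sub_floor]; exact Int.fract_lt_one _
    refine ⟨?_, ?_⟩
    · rw [cfQuot, one_div]; exact (hi.sub_intCast _).inv
    · rw [cfQuot]; exact one_lt_one_div hfpos hflt

lemma cfDigit_ge_one (α : ℝ) (hirr : Irrational α) (h0 : 0 < α) (h1 : α < 1) (k : ℕ) :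
    1 ≤ cfDigit α (k + 1) := by
  have h := (cfQuot_irr_gt α hirr h0 h1 k).2
  show (1 : ℤ) ≤ ⌊cfQuot α k⌋
  exact Int.le_floor.mpr (by exact_mod_cast h.le)

lemma cfQ_ge_one (α : ℝ) (hirr : Irrational α) (h0 : 0 < α) (h1 : α < 1) :
    ∀ k, 1 ≤ cfQ α k := by
  intro k
  induction k using Nat.strong_induction_on with
  | _ k ih =>
    match k with
    | 0 => simp [cfQ]
    | 1 => rw [cfQ]; exact cfDigit_ge_one α hirr h0 h1 0
    | (n+2) =>
      rw [cfQ]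
      have h1' := ih (n+1) (by omega)
      have h2' := ih n (by omega)
      have h3' := cfDigit_ge_one α hirr h0 h1 (n+1)
      nlinarith

lemma cf_det (α : ℝ) : ∀ k, cfP α (k+1) * cfQ α k - cfQ α (k+1) * cfP α k = (-1)^k := by
  intro k
  induction k with
  | zero => simp [cfP, cfQ]
  | succ n ih =>
    rw [show cfP α (n+2) = cfDigit α (n + 2) * cfP α (n + 1) + cfP α n from rfl,
        show cfQ α (n+2) = cfDigit α (n + 2) * cfQ α (n + 1) + cfQ α n from rfl]
    linear_combination (-1 : ℤ) * ih

lemma cf_rel (α : ℝ) (hirr : Irrational α) (h0 : 0 < α) (h1 : α < 1) (k : ℕ) :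
    (cfQuot α k - (cfDigit α (k+1) : ℝ)) * cfQuot α (k+1) = 1 := by
  have hi := (cfQuot_irr_gt α hirr h0 h1 k).1
  have hne : cfQuot α k - (⌊cfQuot α k⌋ : ℝ) ≠ 0 :=
    sub_ne_zero.mpr (hi.ne_int _)
  show (cfQuot α k - (⌊cfQuot α k⌋ : ℝ)) * cfQuot α (k+1) = 1
  rw [cfQuot]
  field_simp

lemma cf_identity (α : ℝ) (hirr : Irrational α) (h0 : 0 < α) (h1 : α < 1) :
    ∀ k, α * ((cfQ α (k+1) : ℝ) * cfQuot α (k+1) + (cfQ α k : ℝ))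
        = (cfP α (k+1) : ℝ) * cfQuot α (k+1) + (cfP α k : ℝ) := by
  intro k
  induction k with
  | zero =>
    have hα : α ≠ 0 := ne_of_gt h0
    have hi : Irrational (cfQuot α 0) := (cfQuot_irr_gt α hirr h0 h1 0).1
    have hne : cfQuot α 0 - (⌊cfQuot α 0⌋ : ℝ) ≠ 0 := sub_ne_zero.mpr (hi.ne_int _)
    have hrel := cf_rel α hirr h0 h1 0
    have ht0 : α * cfQuot α 0 = 1 := by rw [cfQuot]; field_simp
    show α * ((cfDigit α 1 : ℝ) * cfQuot α 1 + ((1:ℤ):ℝ)) = ((1:ℤ):ℝ) * cfQuot α 1 + ((0:ℤ):ℝ)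
    push_cast
    linear_combination (-α) * hrel + (cfQuot α 1) * ht0
  | succ n ih =>
    have hrel := cf_rel α hirr h0 h1 (n+1)
    rw [show cfP α (n+2) = cfDigit α (n + 2) * cfP α (n + 1) + cfP α n from rfl,
        show cfQ α (n+2) = cfDigit α (n + 2) * cfQ α (n + 1) + cfQ α n from rfl]
    push_cast
    linear_combination (cfQuot α (n+2)) * ih
      - (α * (cfQ α (n+1) : ℝ) - (cfP α (n+1) : ℝ)) * hrel

lemma cf_err_bound (α : ℝ) (hirr : Irrational α) (h0 : 0 < α) (h1 : α < 1) (k : ℕ) :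
    |(cfQ α (k+1) : ℝ) * α - (cfP α (k+1) : ℝ)| < 1 / (cfQ α (k+2) : ℝ) := by
  set t := cfQuot α (k+1) with ht
  have hq1 : (1:ℝ) ≤ (cfQ α (k+1) : ℝ) := by exact_mod_cast cfQ_ge_one α hirr h0 h1 (k+1)
  have hq0 : (1:ℝ) ≤ (cfQ α k : ℝ) := by exact_mod_cast cfQ_ge_one α hirr h0 h1 k
  have hq2 : (1:ℝ) ≤ (cfQ α (k+2) : ℝ) := by exact_mod_cast cfQ_ge_one α hirr h0 h1 (k+2)
  have htg : 1 < t := (cfQuot_irr_gt α hirr h0 h1 (k+1)).2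
  set D : ℝ := (cfQ α (k+1) : ℝ) * t + (cfQ α k : ℝ) with hD
  have hDpos : 0 < D := by nlinarith
  -- e * D = (-1)^(k+1)
  have hid := cf_identity α hirr h0 h1 k
  have hdet : ((cfP α (k+1) : ℝ)) * (cfQ α k : ℝ) - (cfQ α (k+1) : ℝ) * (cfP α k : ℝ)
      = (-1:ℝ)^k := by exact_mod_cast cf_det α k
  have heD : ((cfQ α (k+1) : ℝ) * α - (cfP α (k+1) : ℝ)) * D = (-1:ℝ)^(k+1) := by
    rw [hD]
    linear_combination (cfQ α (k+1) : ℝ) * hid - hdet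
  have habs : |(cfQ α (k+1) : ℝ) * α - (cfP α (k+1) : ℝ)| = 1 / D := by
    have : |(cfQ α (k+1) : ℝ) * α - (cfP α (k+1) : ℝ)| * D = 1 := by
      rw [← abs_of_pos hDpos, ← abs_mul, heD, abs_pow, abs_neg, abs_one, one_pow]
    field_simp at this ⊢
    linarith [this]
  rw [habs]
  apply one_div_lt_one_div_of_lt (by linarith)
  -- cfQ α (k+2) < D
  have hfloor : (cfDigit α (k+2) : ℝ) < t := by
    have hle : (⌊t⌋ : ℝ) ≤ t := Int.floor_le t
    have hne : t ≠ (⌊t⌋ : ℝ) := (cfQuot_irr_gt α hirr h0 h1 (k+1)).1.ne_int _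
    show ((⌊cfQuot α (k+1)⌋ : ℤ) : ℝ) < t
    cases lt_or_eq_of_le hle with
    | inl h => exact h
    | inr h => exact absurd h.symm hne
  rw [show cfQ α (k+2) = cfDigit α (k + 2) * cfQ α (k + 1) + cfQ α k from rfl]
  push_cast
  nlinarith

/-- For irrational `α ∈ (0,1)` with convergents `p_k/q_k` and `k ≥ 1`, every integer `j` with
`1 ≤ j < q_{k+1}/3` satisfies `{jα} ∉ [1/(3 q_k), 2/(3 q_k)]`. -/
theorem stmt_3 (α : ℝ) (hirr : Irrational α) (h0 : 0 < α) (h1 : α < 1) :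
    ∀ k : ℕ, 1 ≤ k → ∀ j : ℕ, 1 ≤ j → (j : ℝ) < (cfQ α (k + 1) : ℝ) / 3 →
      Int.fract ((j : ℝ) * α) ∉
        Set.Icc (1 / (3 * (cfQ α k : ℝ))) (2 / (3 * (cfQ α k : ℝ))) := by
  intro k hk j hj hjlt hmem
  obtain ⟨m, rfl⟩ : ∃ m, k = m + 1 := ⟨k - 1, by omega⟩
  set qk : ℝ := (cfQ α (m+1) : ℝ) with hqk
  set Qk : ℝ := (cfQ α (m+2) : ℝ) with hQk
  set pk : ℝ := (cfP α (m+1) : ℝ) with hpk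
  have hqk1 : (1:ℝ) ≤ qk := by rw [hqk]; exact_mod_cast cfQ_ge_one α hirr h0 h1 (m+1)
  have hQk1 : (1:ℝ) ≤ Qk := by rw [hQk]; exact_mod_cast cfQ_ge_one α hirr h0 h1 (m+2)
  have hqkpos : 0 < qk := by linarith
  have hQkpos : 0 < Qk := by linarith
  have hjr : (1:ℝ) ≤ (j:ℝ) := by exact_mod_cast hj
  have herr := cf_err_bound α hirr h0 h1 m
  rw [← hqk, ← hpk, ← hQk] at herr
  -- |jα - j pk/qk| < 1/(3 qk)
  have hδ : |(j:ℝ) * α - (j:ℝ) * pk / qk| < 1 / (3 * qk) := by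
    have h1' : (j:ℝ) * α - (j:ℝ) * pk / qk = ((j:ℝ) / qk) * (qk * α - pk) := by
      field_simp
    rw [h1', abs_mul, abs_div, abs_of_pos hqkpos, abs_of_pos (by linarith : (0:ℝ) < (j:ℝ))]
    have hlt : ((j:ℝ) / qk) * |qk * α - pk| < ((j:ℝ) / qk) * (1 / Qk) := by
      apply mul_lt_mul_of_pos_left herr (by positivity)
    refine hlt.trans_le ?_
    rw [div_mul_div_comm, mul_one]
    rw [div_le_div_iff₀ (by positivity) (by positivity)]
    nlinarith
  set n : ℤ := ⌊(j:ℝ) * α⌋ with hn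
  have hfr : Int.fract ((j:ℝ) * α) = (j:ℝ) * α - n := rfl
  obtain ⟨hlo, hhi⟩ := hmem
  rw [hfr] at hlo hhi
  -- n < j pk / qk < n + 1/qk
  have habs1 : (j:ℝ) * α - (j:ℝ) * pk / qk < 1 / (3 * qk) := (abs_lt.mp hδ).2
  have habs2 : -(1 / (3 * qk)) < (j:ℝ) * α - (j:ℝ) * pk / qk := (abs_lt.mp hδ).1
  have hlow : (n:ℝ) < (j:ℝ) * pk / qk := by linarith
  have hsum : 1 / (3 * qk) + 2 / (3 * qk) = 1 / qk := by
    rw [← add_div, ← div_div]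
    norm_num
  have hhigh : (j:ℝ) * pk / qk < (n:ℝ) + 1 / qk := by linarith
  -- multiply by qk
  have hlow' : (n:ℝ) * qk < (j:ℝ) * pk := (lt_div_iff₀ hqkpos).mp hlow
  have hhigh' : (j:ℝ) * pk < (n:ℝ) * qk + 1 := by
    have h := (div_lt_iff₀ hqkpos).mp hhigh
    have : ((n:ℝ) + 1/qk) * qk = (n:ℝ) * qk + 1 := by field_simp
    linarith [h, this]
  have hZ1 : n * cfQ α (m+1) < (j:ℤ) * cfP α (m+1) := by
    rw [hqk, hpk] at hlow'; exact_mod_cast hlow'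
  have hZ2 : (j:ℤ) * cfP α (m+1) < n * cfQ α (m+1) + 1 := by
    rw [hqk, hpk] at hhigh'; exact_mod_cast hhigh'
  omega
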